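/- For any finite family {K_i} of n×n complex matrices, there exists a unital completely positive map Φ on n×n complex matrices whose fixed-point set {X : Φ(X) = X} is exactly the set of matrices that commute with every K_i and with every K_iᴴ. -/

import Mathlib

open Matrix Kronecker BigOperators
open scoped ComplexOrder

noncomputable def trB {A B : Type*} [Fintype B] (ρ : Matrix (A × B) (A × B) ℂ) :
    Matrix A A ℂ :=
  Matrix.of fun a a' => ∑ b, ρ (a, b) (a', b)

noncomputable def trA {A B : Type*} [Fintype A] (ρ : Matrix (A × B) (A × B) ℂ) :
    Matrix B B ℂ :=
  Matrix.of fun b b' => ∑ a, ρ (a, b) (a, b')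

def IsState {A : Type*} [Fintype A] (ρ : Matrix A A ℂ) : Prop :=
  ρ.PosSemidef ∧ ρ.trace = 1

def IsQChannel {m n : Type*} [Fintype m] [DecidableEq m] [Fintype n]
    (Φ : Matrix m m ℂ → Matrix n n ℂ) : Prop :=
  ∃ (N : ℕ) (K : Fin N → Matrix n m ℂ),
    (∀ X, Φ X = ∑ i, K i * X * (K i)ᴴ) ∧ (∑ i, (K i)ᴴ * K i = 1)

def IsOrthProjFamily {A : Type*} [Fintype A] [DecidableEq A] {N : ℕ}
    (P : Fin N → Matrix A A ℂ) : Prop :=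
  (∀ k, (P k).IsHermitian) ∧ (∀ k, P k * P k = P k) ∧
  (∀ j k, j ≠ k → P j * P k = 0) ∧ (∑ k, P k = 1)

def IsTQQ {A B : Type*} [Fintype A] [DecidableEq A] [Fintype B] [DecidableEq B]
    (ρ : Matrix (A × B) (A × B) ℂ) : Prop :=
  ¬ ∃ (N : ℕ) (P : Fin N → Matrix A A ℂ),
      IsOrthProjFamily P ∧ (∃ j k, j ≠ k ∧ P j ≠ 0 ∧ P k ≠ 0) ∧
      ∑ k, (P k ⊗ₖ (1 : Matrix B B ℂ)) * ρ * (P k ⊗ₖ (1 : Matrix B B ℂ)) = ρ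

noncomputable def vnEntropy {A : Type*} [Fintype A] [DecidableEq A]
    (ρ : Matrix A A ℂ) : ℝ :=
  if h : ρ.IsHermitian then -∑ i, (h.eigenvalues i) * Real.log (h.eigenvalues i) else 0

noncomputable def mutInfo {A B : Type*} [Fintype A] [DecidableEq A] [Fintype B] [DecidableEq B]
    (ρ : Matrix (A × B) (A × B) ℂ) : ℝ :=
  vnEntropy (trB ρ) + vnEntropy (trA ρ) - vnEntropy ρ


def IsUnitalCP {n : Type*} [Fintype n] [DecidableEq n]
    (Φ : Matrix n n ℂ → Matrix n n ℂ) : Prop :=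
  ∃ (N : ℕ) (K : Fin N → Matrix n n ℂ),
    (∀ X, Φ X = ∑ i, K i * X * (K i)ᴴ) ∧ (∑ i, K i * (K i)ᴴ = 1)

section AuxCommutantFP
set_option linter.unusedSectionVars false
variable {m : Type*} [Fintype m] [DecidableEq m]

lemma trace_conjTranspose_mul_self_eq (T : Matrix m m ℂ) :
    (Tᴴ * T).trace = ((∑ i, ∑ k, Complex.normSq (T k i) : ℝ) : ℂ) := by
  simp only [trace, diag, mul_apply, conjTranspose_apply]
  push_cast
  refine Finset.sum_congr rfl fun i _ => Finset.sum_congr rfl fun k _ => ?_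
  rw [Complex.star_def, ← Complex.normSq_eq_conj_mul_self]

lemma eq_zero_of_trace_conjTranspose_mul_self (T : Matrix m m ℂ)
    (h : (Tᴴ * T).trace = 0) : T = 0 := by
  rw [trace_conjTranspose_mul_self_eq] at h
  have h' : (∑ i, ∑ k, Complex.normSq (T k i) : ℝ) = 0 := by exact_mod_cast h
  ext a b
  have h1 := (Finset.sum_eq_zero_iff_of_nonneg (fun i _ =>
    Finset.sum_nonneg fun k _ => Complex.normSq_nonneg _)).mp h' b (Finset.mem_univ _)
  have h2 := (Finset.sum_eq_zero_iff_of_nonneg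
    (fun k _ => Complex.normSq_nonneg _)).mp h1 a (Finset.mem_univ _)
  simpa using Complex.normSq_eq_zero.mp h2

/-- Fixed points of a unital, trace-preserving CP map commute with all Kraus operators. -/
lemma fixed_point_commutes {M : ℕ} (L : Fin M → Matrix m m ℂ) (X : Matrix m m ℂ)
    (hu : ∑ j, L j * (L j)ᴴ = 1) (ht : ∑ j, (L j)ᴴ * L j = 1)
    (hfix : ∑ j, L j * X * (L j)ᴴ = X) :
    ∀ j, L j * X = X * L j := by
  have hfix' : ∑ j, L j * Xᴴ * (L j)ᴴ = Xᴴ := by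
    have := congrArg conjTranspose hfix
    rw [conjTranspose_sum] at this
    simpa only [conjTranspose_mul, conjTranspose_conjTranspose, mul_assoc] using this
  have key : ∑ j, ((L j * X - X * L j)ᴴ * (L j * X - X * L j)).trace = 0 := by
    have e1 : ∀ j, ((L j * X - X * L j)ᴴ * (L j * X - X * L j)).trace
        = ((L j)ᴴ * L j * (X * Xᴴ)).trace - ((L j * Xᴴ * (L j)ᴴ) * X).trace
          - (Xᴴ * (L j * X * (L j)ᴴ)).trace + (Xᴴ * X * (L j * (L j)ᴴ)).trace := by
      intro j
      have expand : (L j * X - X * L j)ᴴ * (L j * X - X * L j)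
          = Xᴴ * ((L j)ᴴ * (L j * X)) - (Xᴴ * (L j)ᴴ * X) * L j
            - (L j)ᴴ * (Xᴴ * (L j * X)) + (L j)ᴴ * (Xᴴ * (X * L j)) := by
        simp only [conjTranspose_sub, conjTranspose_mul]
        noncomm_ring
      rw [expand, trace_add, trace_sub, trace_sub]
      congr 1
      · congr 1
        · congr 1
          · rw [trace_mul_comm]; congr 1; noncomm_ring
          · rw [trace_mul_comm]; congr 1; noncomm_ring
        · rw [trace_mul_comm]; congr 1; noncomm_ring
      · rw [trace_mul_comm]; congr 1; noncomm_ring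
    simp only [e1]
    rw [Finset.sum_add_distrib, Finset.sum_sub_distrib, Finset.sum_sub_distrib]
    rw [← trace_sum, ← trace_sum, ← trace_sum, ← trace_sum,
      ← Finset.sum_mul, ← Finset.sum_mul, ← Finset.mul_sum, ← Finset.mul_sum,
      ht, hu, hfix, hfix', one_mul, mul_one]
    rw [trace_mul_comm Xᴴ X]
    ring
  intro j
  have nonneg : ∀ j : Fin M, 0 ≤ (∑ i, ∑ k, Complex.normSq ((L j * X - X * L j) k i) : ℝ) :=
    fun j => Finset.sum_nonneg fun i _ => Finset.sum_nonneg fun k _ => Complex.normSq_nonneg _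
  simp only [trace_conjTranspose_mul_self_eq] at key
  rw [← Complex.ofReal_sum, Complex.ofReal_eq_zero] at key
  have hj := (Finset.sum_eq_zero_iff_of_nonneg (fun j _ => nonneg j)).mp key j (Finset.mem_univ _)
  have hz : L j * X - X * L j = 0 := by
    apply eq_zero_of_trace_conjTranspose_mul_self
    rw [trace_conjTranspose_mul_self_eq, hj]
    simp
  exact sub_eq_zero.mp hz

noncomputable def Matrix.PosSemidef.sqrt {A : Matrix m m ℂ} (hA : A.PosSemidef) : Matrix m m ℂ :=
  (hA.1.eigenvectorUnitary : Matrix m m ℂ) * diagonal ((↑) ∘ Real.sqrt ∘ hA.1.eigenvalues) *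
    star (hA.1.eigenvectorUnitary : Matrix m m ℂ)

lemma Matrix.IsHermitian.star_mul_self_mul_eq_diagonal {A : Matrix m m ℂ} (hA : A.IsHermitian) :
    star (hA.eigenvectorUnitary : Matrix m m ℂ) * A * (hA.eigenvectorUnitary : Matrix m m ℂ)
      = diagonal (RCLike.ofReal ∘ hA.eigenvalues) := by
  have := hA.conjStarAlgAut_star_eigenvectorUnitary
  rwa [Unitary.conjStarAlgAut_apply, Unitary.coe_star, star_star] at this

lemma Matrix.PosSemidef.posSemidef_sqrt {A : Matrix m m ℂ} (hA : A.PosSemidef) :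
    hA.sqrt.PosSemidef := by
  unfold Matrix.PosSemidef.sqrt
  rw [show star (hA.1.eigenvectorUnitary : Matrix m m ℂ)
    = (hA.1.eigenvectorUnitary : Matrix m m ℂ)ᴴ from rfl]
  apply Matrix.PosSemidef.mul_mul_conjTranspose_same
  refine posSemidef_diagonal_iff.mpr fun k => ?_
  simp only [Function.comp_apply]
  exact_mod_cast Real.sqrt_nonneg _

lemma Matrix.PosSemidef.sqrt_mul_self {A : Matrix m m ℂ} (hA : A.PosSemidef) :
    hA.sqrt * hA.sqrt = A := by
  unfold Matrix.PosSemidef.sqrt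
  set U : Matrix m m ℂ := (hA.1.eigenvectorUnitary : Matrix m m ℂ)
  set D' : Matrix m m ℂ := diagonal ((↑) ∘ Real.sqrt ∘ hA.1.eigenvalues)
  have hUU : star U * U = 1 := Unitary.coe_star_mul_self hA.1.eigenvectorUnitary
  have hDD : D' * D' = diagonal (RCLike.ofReal ∘ hA.1.eigenvalues) := by
    simp only [D', diagonal_mul_diagonal]
    congr 1; funext i
    simp only [Function.comp_apply]
    rw [← Complex.ofReal_mul, Real.mul_self_sqrt (hA.eigenvalues_nonneg i)]
    rfl
  have hspec : A = U * diagonal (RCLike.ofReal ∘ hA.1.eigenvalues) * star U :=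
    hA.1.spectral_theorem
  calc U * D' * star U * (U * D' * star U) = U * (D' * (star U * U) * D') * star U := by
        noncomm_ring
    _ = A := by rw [hUU, mul_one, hDD, ← hspec]

/-- A matrix commuting with a positive semidefinite matrix commutes with its square root. -/
lemma commute_sqrt {A : Matrix m m ℂ} (hA : A.PosSemidef) {X : Matrix m m ℂ}
    (h : X * A = A * X) : X * hA.sqrt = hA.sqrt * X := by
  set U : Matrix m m ℂ := (hA.1.eigenvectorUnitary : Matrix m m ℂ) with hUdef
  have hUU : star U * U = 1 := Unitary.coe_star_mul_self hA.1.eigenvectorUnitary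
  have hUU' : U * star U = 1 := Unitary.coe_mul_star_self hA.1.eigenvectorUnitary
  set D : Matrix m m ℂ := diagonal (RCLike.ofReal ∘ hA.1.eigenvalues) with hDdef
  set D' : Matrix m m ℂ := diagonal ((↑) ∘ Real.sqrt ∘ hA.1.eigenvalues) with hD'def
  have hDA : star U * A * U = D := hA.1.star_mul_self_mul_eq_diagonal
  set Y : Matrix m m ℂ := star U * X * U with hYdef
  have hYD : Y * D = D * Y := by
    have : star U * (X * A) * U = star U * (A * X) * U := by rw [h]
    calc Y * D = (star U * X * U) * (star U * A * U) := by rw [hDA]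
      _ = star U * (X * (U * star U) * A) * U := by noncomm_ring
      _ = star U * (X * A) * U := by rw [hUU']; noncomm_ring
      _ = star U * (A * X) * U := this
      _ = star U * (A * (U * star U) * X) * U := by rw [hUU']; noncomm_ring
      _ = (star U * A * U) * (star U * X * U) := by noncomm_ring
      _ = D * Y := by rw [hDA]
  have hYD' : Y * D' = D' * Y := by
    ext i j
    rw [hD'def]
    rw [Matrix.mul_diagonal, Matrix.diagonal_mul]
    by_cases hy : Y i j = 0
    · simp [hy]
    · have := congrFun (congrFun hYD i) j
      rw [hDdef, Matrix.mul_diagonal, Matrix.diagonal_mul] at this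
      have h2 : (RCLike.ofReal ∘ hA.1.eigenvalues) j * Y i j
          = (RCLike.ofReal ∘ hA.1.eigenvalues) i * Y i j := by
        rw [mul_comm]; exact this
      have h3 := mul_right_cancel₀ hy h2
      simp only [Function.comp_apply] at h3
      have hev : hA.1.eigenvalues j = hA.1.eigenvalues i := RCLike.ofReal_inj.mp h3
      simp [Function.comp, hev, mul_comm]
  have hX : X = U * Y * star U := by
    rw [hYdef]
    calc X = (U * star U) * X * (U * star U) := by rw [hUU']; noncomm_ring
      _ = U * (star U * X * U) * star U := by noncomm_ring
  have hsqrt : hA.sqrt = U * D' * star U := rfl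
  rw [hsqrt, hX]
  calc (U * Y * star U) * (U * D' * star U)
      = U * (Y * (star U * U) * D') * star U := by noncomm_ring
    _ = U * (Y * D') * star U := by rw [hUU]; noncomm_ring
    _ = U * (D' * Y) * star U := by rw [hYD']
    _ = U * (D' * (star U * U) * Y) * star U := by rw [hUU]; noncomm_ring
    _ = (U * D' * star U) * (U * Y * star U) := by noncomm_ring

end AuxCommutantFP

/-- For any finite family `{K i}` of `n × n` matrices there is a unital CP map
(with Kraus operators `L j`) whose fixed points are exactly the matrices commuting with
every `K i` and every `(K i)ᴴ`. -/
theorem exists_unitalCP_with_commutant_fixed_points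
    {n : ℕ} (N : ℕ) (K : Fin N → Matrix (Fin n) (Fin n) ℂ) :
    ∃ (M : ℕ) (L : Fin M → Matrix (Fin n) (Fin n) ℂ),
      (∑ j, L j * (L j)ᴴ = 1) ∧
      ∀ X : Matrix (Fin n) (Fin n) ℂ,
        (∑ j, L j * X * (L j)ᴴ = X) ↔
        (∀ i, K i * X = X * K i ∧ (K i)ᴴ * X = X * (K i)ᴴ) := by
  classical
  -- the "mixing" Hermitian matrix
  set S : Matrix (Fin n) (Fin n) ℂ := ∑ i, (K i * (K i)ᴴ + (K i)ᴴ * K i) with hSdef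
  have hS : S.IsHermitian := by
    unfold Matrix.IsHermitian
    rw [hSdef, conjTranspose_sum]
    refine Finset.sum_congr rfl fun i _ => ?_
    rw [conjTranspose_add, conjTranspose_mul, conjTranspose_mul,
      conjTranspose_conjTranspose, add_comm]
  set ev : Fin n → ℝ := hS.eigenvalues with hevdef
  set c : ℝ := (1 + ∑ k, |ev k|)⁻¹ with hcdef
  have hsum_nonneg : 0 ≤ ∑ k, |ev k| := Finset.sum_nonneg fun k _ => abs_nonneg _
  have hpos : 0 < 1 + ∑ k, |ev k| := by linarith
  have hc : 0 < c := inv_pos.mpr hpos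
  have hc1 : ∀ k, 0 ≤ 1 - c * ev k := by
    intro k
    have h1 : ev k ≤ 1 + ∑ j, |ev j| := by
      have : |ev k| ≤ ∑ j, |ev j| :=
        Finset.single_le_sum (fun j _ => abs_nonneg (ev j)) (Finset.mem_univ k)
      have := le_abs_self (ev k)
      linarith
    have : c * ev k ≤ c * (1 + ∑ j, |ev j|) := by
      apply mul_le_mul_of_nonneg_left h1 hc.le
    rw [hcdef, inv_mul_cancel₀ hpos.ne'] at this
    linarith
  set U : Matrix (Fin n) (Fin n) ℂ := (hS.eigenvectorUnitary : Matrix (Fin n) (Fin n) ℂ)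
    with hUdef
  have hUU : star U * U = 1 := Unitary.coe_star_mul_self hS.eigenvectorUnitary
  have hUU' : U * star U = 1 := Unitary.coe_mul_star_self hS.eigenvectorUnitary
  set A : Matrix (Fin n) (Fin n) ℂ := 1 - (c : ℂ) • S with hAdef
  have hdiag : diagonal (fun k => ((1 - c * ev k : ℝ) : ℂ))
      = 1 - (c : ℂ) • diagonal (RCLike.ofReal ∘ ev) := by
    ext i j
    rcases eq_or_ne i j with rfl | hij
    · simp only [Matrix.sub_apply, Matrix.smul_apply, Matrix.one_apply_eq,
        diagonal_apply_eq, Function.comp_apply, smul_eq_mul,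
        show (RCLike.ofReal : ℝ → ℂ) = Complex.ofReal from rfl]
      push_cast
      ring
    · simp [diagonal_apply_ne _ hij, Matrix.one_apply_ne hij]
  have hAeq : A = U * diagonal (fun k => ((1 - c * ev k : ℝ) : ℂ)) * star U := by
    rw [hdiag, hAdef]
    have hspec : S = U * diagonal (RCLike.ofReal ∘ ev) * star U := hS.spectral_theorem
    rw [mul_sub, sub_mul, mul_one, hUU', mul_smul_comm, smul_mul_assoc, ← hspec]
  have hA : A.PosSemidef := by
    rw [hAeq, show star U = Uᴴ from rfl]
    apply Matrix.PosSemidef.mul_mul_conjTranspose_same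
    refine posSemidef_diagonal_iff.mpr fun k => ?_
    exact_mod_cast hc1 k
  set R : Matrix (Fin n) (Fin n) ℂ := hA.sqrt with hRdef
  have hR2 : R * R = A := hA.sqrt_mul_self
  have hRH : Rᴴ = R := hA.posSemidef_sqrt.1
  set sc : ℝ := Real.sqrt c with hscdef
  have hsc : (sc : ℂ) * (sc : ℂ) = (c : ℂ) := by
    rw [← Complex.ofReal_mul, Real.mul_self_sqrt hc.le]
  have hscstar : star (sc : ℂ) = (sc : ℂ) := Complex.conj_ofReal _
  have hsc0 : (sc : ℂ) ≠ 0 :=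
    Complex.ofReal_ne_zero.mpr (Real.sqrt_pos.mpr hc).ne'
  -- the Kraus family
  set L' : (Fin N ⊕ Fin N) ⊕ Unit → Matrix (Fin n) (Fin n) ℂ :=
    Sum.elim (Sum.elim (fun i => (sc : ℂ) • K i) (fun i => (sc : ℂ) • (K i)ᴴ))
      (fun _ => R) with hL'def
  set e : Fin (Fintype.card ((Fin N ⊕ Fin N) ⊕ Unit)) ≃ (Fin N ⊕ Fin N) ⊕ Unit :=
    (Fintype.equivFin _).symm with hedef
  have hu : ∑ j, L' (e j) * (L' (e j))ᴴ = 1 := by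
    rw [Equiv.sum_comp e (fun x => L' x * (L' x)ᴴ)]
    rw [Fintype.sum_sum_type, Fintype.sum_sum_type]
    simp only [hL'def, Sum.elim_inl, Sum.elim_inr, conjTranspose_smul, hscstar,
      smul_mul_assoc, mul_smul_comm, smul_smul, hsc, conjTranspose_conjTranspose, hRH]
    rw [Finset.sum_const, Finset.card_univ, Fintype.card_unit, one_smul, hR2, hAdef,
      hSdef, Finset.sum_add_distrib, smul_add, ← Finset.smul_sum, ← Finset.smul_sum]
    abel
  have ht : ∑ j, (L' (e j))ᴴ * L' (e j) = 1 := by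
    rw [Equiv.sum_comp e (fun x => (L' x)ᴴ * L' x)]
    rw [Fintype.sum_sum_type, Fintype.sum_sum_type]
    simp only [hL'def, Sum.elim_inl, Sum.elim_inr, conjTranspose_smul, hscstar,
      smul_mul_assoc, mul_smul_comm, smul_smul, hsc, conjTranspose_conjTranspose, hRH]
    rw [Finset.sum_const, Finset.card_univ, Fintype.card_unit, one_smul, hR2, hAdef,
      hSdef, Finset.sum_add_distrib, smul_add, ← Finset.smul_sum, ← Finset.smul_sum]
    abel
  refine ⟨_, fun j => L' (e j), hu, fun X => ⟨fun hfix => ?_, fun hcomm => ?_⟩⟩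
  · -- fixed point ⇒ commutes
    have hcom := fixed_point_commutes (fun j => L' (e j)) X hu ht hfix
    have hcom' : ∀ x, L' x * X = X * L' x := fun x => by
      simpa using hcom (e.symm x)
    intro i
    constructor
    · have h1 := hcom' (Sum.inl (Sum.inl i))
      simp only [hL'def, Sum.elim_inl, smul_mul_assoc, mul_smul_comm] at h1
      exact smul_right_injective _ hsc0 h1
    · have h2 := hcom' (Sum.inl (Sum.inr i))
      simp only [hL'def, Sum.elim_inl, Sum.elim_inr, smul_mul_assoc, mul_smul_comm] at h2
      exact smul_right_injective _ hsc0 h2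
  · -- commutes ⇒ fixed point
    have hXS : X * S = S * X := by
      rw [hSdef, Finset.mul_sum, Finset.sum_mul]
      refine Finset.sum_congr rfl fun i _ => ?_
      have h1 := (hcomm i).1
      have h2 := (hcomm i).2
      calc X * (K i * (K i)ᴴ + (K i)ᴴ * K i)
          = (X * K i) * (K i)ᴴ + (X * (K i)ᴴ) * K i := by noncomm_ring
        _ = (K i * X) * (K i)ᴴ + ((K i)ᴴ * X) * K i := by rw [← h1, ← h2]
        _ = K i * (X * (K i)ᴴ) + (K i)ᴴ * (X * K i) := by noncomm_ring
        _ = K i * ((K i)ᴴ * X) + (K i)ᴴ * (K i * X) := by rw [← h1, ← h2]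
        _ = (K i * (K i)ᴴ + (K i)ᴴ * K i) * X := by noncomm_ring
    have hXA : X * A = A * X := by
      rw [hAdef, mul_sub, sub_mul, mul_one, one_mul, mul_smul_comm, smul_mul_assoc, hXS]
    have hXR : X * R = R * X := commute_sqrt hA hXA
    have hLX : ∀ x, L' x * X = X * L' x := by
      rintro ((i | i) | u)
      · simp only [hL'def, Sum.elim_inl, smul_mul_assoc, mul_smul_comm, (hcomm i).1]
      · simp only [hL'def, Sum.elim_inl, Sum.elim_inr, smul_mul_assoc, mul_smul_comm,
          (hcomm i).2]
      · simpa [hL'def] using hXR.symm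
    calc ∑ j, L' (e j) * X * (L' (e j))ᴴ
        = ∑ j, X * (L' (e j) * (L' (e j))ᴴ) := by
          refine Finset.sum_congr rfl fun j _ => ?_
          rw [hLX (e j), mul_assoc]
      _ = X * ∑ j, L' (e j) * (L' (e j))ᴴ := by rw [Finset.mul_sum]
      _ = X := by rw [hu, mul_one]
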